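/- If x and y are positive integers with x ≥ 3 satisfying x^2 - 343*y^2 = 2, then each of (x-2)^2, (x-1)^2, and x^2 - 2 is a powerful number. -/
import Mathlib


def Powerful (n : ℕ) : Prop :=
  0 < n ∧ ∀ p : ℕ, p.Prime → p ∣ n → p ^ 2 ∣ n

lemma powerful_sq {n : ℕ} (hn : 0 < n) : Powerful (n ^ 2) := by
  refine ⟨by positivity, fun p hp hpd => ?_⟩
  exact pow_dvd_pow_of_dvd (hp.dvd_of_dvd_pow hpd) 2

theorem stmt_2 (x y : ℕ) (hx : 3 ≤ x) (hy : 0 < y)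
    (h : (x : ℤ) ^ 2 - 343 * (y : ℤ) ^ 2 = 2) :
    Powerful ((x - 2) ^ 2) ∧ Powerful ((x - 1) ^ 2) ∧ Powerful (x ^ 2 - 2) := by
  have hx2 : x ^ 2 - 2 = 343 * y ^ 2 := by
    have h1 : (x : ℤ) ^ 2 = 343 * (y : ℤ) ^ 2 + 2 := by linarith
    have h2 : x ^ 2 = 343 * y ^ 2 + 2 := by exact_mod_cast h1
    omega
  refine ⟨powerful_sq (by omega), powerful_sq (by omega), ?_⟩
  rw [hx2]
  refine ⟨by positivity, fun p hp hpd => ?_⟩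
  rcases (Nat.Prime.dvd_mul hp).1 hpd with h7 | hy2
  · have : p = 7 := by
      have h343 : (343 : ℕ) = 7 ^ 3 := by norm_num
      rw [h343] at h7
      have := hp.dvd_of_dvd_pow h7
      have := Nat.le_of_dvd (by norm_num) this
      have := hp.two_le
      interval_cases p <;> omega
    subst this
    exact Dvd.dvd.mul_right (by norm_num) _
  · exact Dvd.dvd.mul_left (pow_dvd_pow_of_dvd (hp.dvd_of_dvd_pow hy2) 2) _
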